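/- Let F_n be a free group with fixed free basis x_1,...,x_n and let ι : F_n → F_n be the automorphism sending each x_i to x_i⁻¹. An automorphism Φ of F_n sends each basis element x_i to a palindrome (a word in the x_i spelled the same forwards and backwards) if and only if Φ commutes with ι, i.e. Φ ∘ ι = ι ∘ Φ. -/

import Mathlib

/-- A reduced word in a free group is a palindrome if it reads the same
forwards and backwards (letter-for-letter, with signs). -/
def IsPalindrome {n : ℕ} (w : FreeGroup (Fin n)) : Prop :=
  w.toWord.reverse = w.toWord

/-- The automorphism of the free group inverting each basis element,
given as the induced endomorphism. -/
noncomputable def invGens (n : ℕ) : FreeGroup (Fin n) →* FreeGroup (Fin n) :=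
  FreeGroup.lift fun i => (FreeGroup.of i)⁻¹

private def negL {α : Type*} (p : α × Bool) : α × Bool := (p.1, !p.2)

private lemma negL_injective {α : Type*} : Function.Injective (negL (α := α)) := by
  rintro ⟨a, b⟩ ⟨c, d⟩ h
  simp [negL] at h
  simp [h.1, h.2]

private lemma reduce_map_negL {α : Type*} [DecidableEq α] (L : List (α × Bool)) :
    FreeGroup.reduce (L.map negL) = (FreeGroup.reduce L).map negL := by
  induction L with
  | nil => rfl
  | cons hd tl ih =>
    rw [List.map_cons, FreeGroup.reduce.cons, FreeGroup.reduce.cons, ih]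
    cases h : FreeGroup.reduce tl with
    | nil => rfl
    | cons hd2 tl2 =>
      simp only [List.map_cons, negL]
      by_cases hc : hd.1 = hd2.1 ∧ hd.2 = !hd2.2
      · rw [if_pos hc]
        simp [hc.1, hc.2]
      · rw [if_neg hc]
        have hc' : ¬(hd.1 = hd2.1 ∧ (!hd.2) = !!hd2.2) := by simpa using hc
        simp only [hc', if_false, List.map_cons, negL]

private lemma invGens_mk {n : ℕ} (L : List (Fin n × Bool)) :
    invGens n (FreeGroup.mk L) = FreeGroup.mk (L.map negL) := by
  induction L with
  | nil => rw [List.map_nil, ← FreeGroup.one_eq_mk, map_one]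
  | cons hd tl ih =>
    have : FreeGroup.mk (hd :: tl) = FreeGroup.mk [hd] * FreeGroup.mk tl := by
      rw [FreeGroup.mul_mk]; rfl
    rw [this, map_mul, ih]
    have h1 : invGens n (FreeGroup.mk [hd]) = FreeGroup.mk [negL hd] := by
      obtain ⟨i, b⟩ := hd
      cases b
      · show invGens n ((FreeGroup.of i)⁻¹) = _
        rw [map_inv]
        show ((FreeGroup.lift fun i => (FreeGroup.of i)⁻¹) (FreeGroup.of i))⁻¹ = _
        rw [FreeGroup.lift_apply_of, inv_inv]
        rfl
      · show invGens n (FreeGroup.of i) = _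
        show (FreeGroup.lift fun i => (FreeGroup.of i)⁻¹) (FreeGroup.of i) = _
        rw [FreeGroup.lift_apply_of]
        rfl
    rw [h1, FreeGroup.mul_mk]
    rfl

private lemma invGens_eq_inv_iff {n : ℕ} (w : FreeGroup (Fin n)) :
    invGens n w = w⁻¹ ↔ IsPalindrome w := by
  have h1 : invGens n w = FreeGroup.mk (w.toWord.map negL) := by
    conv_lhs => rw [← FreeGroup.mk_toWord (x := w)]
    exact invGens_mk _
  rw [h1, ← FreeGroup.toWord_injective.eq_iff, FreeGroup.toWord_mk,
    reduce_map_negL, FreeGroup.reduce_toWord, FreeGroup.toWord_inv]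
  show List.map negL w.toWord = (List.map negL w.toWord).reverse ↔ _
  rw [← List.map_reverse,
    Function.Injective.eq_iff (List.map_injective_iff.2 negL_injective),
    IsPalindrome, eq_comm]

/-- An automorphism of a free group sends each basis element to a palindrome
if and only if it commutes with the automorphism inverting each generator. -/
theorem palindromic_iff_commutes_with_inversion {n : ℕ}
    (Φ : FreeGroup (Fin n) ≃* FreeGroup (Fin n)) :
    (∀ i : Fin n, IsPalindrome (Φ (FreeGroup.of i))) ↔
      (∀ w : FreeGroup (Fin n), Φ (invGens n w) = invGens n (Φ w)) := by
  have key : ∀ i, (IsPalindrome (Φ (FreeGroup.of i)) ↔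
      Φ (invGens n (FreeGroup.of i)) = invGens n (Φ (FreeGroup.of i))) := by
    intro i
    have h1 : invGens n (FreeGroup.of i) = (FreeGroup.of i)⁻¹ :=
      FreeGroup.lift_apply_of
    rw [h1, map_inv, ← invGens_eq_inv_iff, eq_comm]
  constructor
  · intro h w
    have := FreeGroup.ext_hom (Φ.toMonoidHom.comp (invGens n))
      ((invGens n).comp Φ.toMonoidHom) (fun i => (key i).1 (h i))
    exact DFunLike.congr_fun this w
  · intro h i
    exact (key i).2 (h (FreeGroup.of i))
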